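/- First-order gap bounds (Lemma 9, parts 1 and 2): For every s, ‖Ṗ(s)‖ ≤ √m · ‖Ḣ(s)‖ / g(s), and ‖(Ṗ(s))~‖ ≤ √m · ‖Ṗ(s)‖ / g(s) ≤ m · ‖Ḣ(s)‖ / g(s)². -/

import Mathlib

set_option linter.unusedSectionVars false
set_option linter.unusedVariables false
set_option linter.unusedTactic false

section FirstOrderGapAux
set_option linter.deprecated false
set_option maxHeartbeats 1600000

open scoped InnerProductSpace ComplexConjugate
open ContinuousLinearMap

variable {V : Type*} [NormedAddCommGroup V] [InnerProductSpace ℂ V] [FiniteDimensional ℂ V]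

lemma aux_symm (p : V →L[ℂ] V) (hsa : IsSelfAdjoint p) (x y : V) :
    ⟪p x, y⟫_ℂ = ⟪x, p y⟫_ℂ :=
  (ContinuousLinearMap.isSelfAdjoint_iff_isSymmetric.mp hsa) x y

lemma aux_proj_norm_le (p : V →L[ℂ] V) (hsa : IsSelfAdjoint p) (hid : p ∘L p = p) (v : V) :
    ‖p v‖ ≤ ‖v‖ := by
  have h1 : ‖p v‖ ^ 2 = RCLike.re ⟪p v, p v⟫_ℂ := (inner_self_eq_norm_sq _).symm
  have h2 : ⟪p v, p v⟫_ℂ = ⟪v, p v⟫_ℂ := by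
    rw [aux_symm p hsa]
    congr 1
    have := congrArg (fun q : V →L[ℂ] V => q v) hid
    simpa using this
  have h3 : RCLike.re ⟪v, p v⟫_ℂ ≤ ‖v‖ * ‖p v‖ := re_inner_le_norm _ _
  rw [h2] at h1
  nlinarith [norm_nonneg (p v), norm_nonneg v]

lemma aux_pythagoras (p : V →L[ℂ] V) (hsa : IsSelfAdjoint p) (hid : p ∘L p = p) (v : V) :
    ‖p v‖ ^ 2 + ‖v - p v‖ ^ 2 = ‖v‖ ^ 2 := by
  have horth : ⟪p v, v - p v⟫_ℂ = 0 := by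
    rw [aux_symm p hsa, map_sub]
    have : p (p v) = p v := by
      have := congrArg (fun q : V →L[ℂ] V => q v) hid
      simpa using this
    rw [this, sub_self, inner_zero_right]
  have : ‖p v + (v - p v)‖ ^ 2 = ‖p v‖ ^ 2 + 2 * RCLike.re ⟪p v, v - p v⟫_ℂ + ‖v - p v‖ ^ 2 :=
    norm_add_sq _ _
  rw [horth] at this
  simp only [map_zero, mul_zero, add_zero] at this
  have hv : p v + (v - p v) = v := by abel
  rw [hv] at this
  linarith

lemma aux_norm_sum_sq {m : ℕ} (w : Fin m → V) (h : ∀ i j, i ≠ j → ⟪w i, w j⟫_ℂ = 0) :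
    ‖∑ i, w i‖ ^ 2 = ∑ i, ‖w i‖ ^ 2 := by
  have h1 : ⟪∑ i, w i, ∑ j, w j⟫_ℂ = ∑ i, ⟪w i, w i⟫_ℂ := by
    rw [sum_inner]
    refine Finset.sum_congr rfl fun i _ => ?_
    rw [inner_sum]
    rw [Finset.sum_eq_single i (fun j _ hj => h i j (Ne.symm hj)) (by simp)]
  have h2 : ‖∑ i, w i‖ ^ 2 = RCLike.re ⟪∑ i, w i, ∑ i, w i⟫_ℂ := (inner_self_eq_norm_sq _).symm
  rw [h2, h1, map_sum]
  exact Finset.sum_congr rfl fun i _ => inner_self_eq_norm_sq _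

lemma aux_PjH {m : ℕ} (H : V →L[ℂ] V) (lam : Fin m → ℝ) (Pj : Fin m → V →L[ℂ] V)
    (hHsa : IsSelfAdjoint H) (hPjsa : ∀ k, IsSelfAdjoint (Pj k))
    (hPjeig : ∀ k, H ∘L Pj k = (lam k : ℂ) • Pj k) (k : Fin m) :
    Pj k ∘L H = (lam k : ℂ) • Pj k := by
  have h : star (H * Pj k) = star ((lam k : ℂ) • Pj k) := congrArg star (hPjeig k)
  rw [star_mul, star_smul, hHsa.star_eq, (hPjsa k).star_eq] at h
  have : star ((lam k : ℂ)) = (lam k : ℂ) := by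
    simp [Complex.star_def, Complex.conj_ofReal]
  rw [this] at h
  exact h

lemma aux_lam_inj {m : ℕ} (H P : V →L[ℂ] V) (lam : Fin m → ℝ) (Pj : Fin m → V →L[ℂ] V)
    (hHsa : IsSelfAdjoint H) (hPjsa : ∀ k, IsSelfAdjoint (Pj k))
    (hPjidem : ∀ k, Pj k ∘L Pj k = Pj k) (hPjne : ∀ k, Pj k ≠ 0)
    (hPjeig : ∀ k, H ∘L Pj k = (lam k : ℂ) • Pj k)
    (hPjfull : ∀ k, ∀ v : V, H v = (lam k : ℂ) • v → Pj k v = v)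
    (hPsum : P = ∑ k, Pj k) (hPidem : P ∘L P = P) :
    Function.Injective lam := by
  intro j k hjk
  -- find eigenvector v for lam j
  obtain ⟨w, hw⟩ : ∃ w, Pj j w ≠ 0 := by
    by_contra h
    push_neg at h
    exact hPjne j (by ext w; simpa using h w)
  set v := Pj j w with hv_def
  have hv : Pj j v = v := by
    have := congrArg (fun q : V →L[ℂ] V => q w) (hPjidem j)
    simpa using this
  have hHv : H v = (lam j : ℂ) • v := by
    have := congrArg (fun q : V →L[ℂ] V => q w) (hPjeig j)
    simpa using this
  -- each Pj l acts on v
  have hact : ∀ l, Pj l v = if lam l = lam j then v else 0 := by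
    intro l
    by_cases hl : lam l = lam j
    · rw [if_pos hl]
      exact hPjfull l v (by rw [hHv, hl])
    · rw [if_neg hl]
      have h1 : Pj l (H v) = (lam l : ℂ) • Pj l v := by
        have := congrArg (fun q : V →L[ℂ] V => q v) (aux_PjH H lam Pj hHsa hPjsa hPjeig l)
        simpa using this
      rw [hHv, map_smul] at h1
      have h2 : ((lam j : ℂ) - lam l) • Pj l v = 0 := by
        rw [sub_smul, h1, sub_self]
      rcases smul_eq_zero.mp h2 with h | h
      · exact absurd (Complex.ofReal_inj.mp (sub_eq_zero.mp h)).symm hl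
      · exact h
  set F := Finset.univ.filter (fun l => lam l = lam j) with hF
  have hPv : P v = (F.card : ℕ) • v := by
    rw [hPsum]
    have : (∑ l, Pj l) v = ∑ l, Pj l v := by simp
    rw [this]
    simp_rw [hact]
    rw [← Finset.sum_filter, Finset.sum_const]
  have hPPv : P (P v) = P v := by
    have := congrArg (fun q : V →L[ℂ] V => q v) hPidem
    simpa using this
  rw [hPv, map_nsmul, hPv, smul_smul] at hPPv
  have hcast : (((F.card * F.card : ℕ) : ℂ) - ((F.card : ℕ) : ℂ)) • v = 0 := by
    rw [sub_smul, Nat.cast_smul_eq_nsmul, Nat.cast_smul_eq_nsmul, hPPv, sub_self]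
  have hcard : F.card * F.card = F.card := by
    rcases smul_eq_zero.mp hcast with h | h
    · have h2 := sub_eq_zero.mp h
      exact_mod_cast h2
    · exact absurd h hw
  have hjF : j ∈ F := by simp [hF]
  have hkF : k ∈ F := by simp [hF, hjk]
  have hcard1 : F.card ≤ 1 := by
    have hpos : 0 < F.card := Finset.card_pos.mpr ⟨j, hjF⟩
    nlinarith [hcard, hpos]
  exact Finset.card_le_one.mp hcard1 j hjF k hkF

lemma aux_orth {m : ℕ} (H : V →L[ℂ] V) (lam : Fin m → ℝ) (Pj : Fin m → V →L[ℂ] V)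
    (hHsa : IsSelfAdjoint H) (hPjsa : ∀ k, IsSelfAdjoint (Pj k))
    (hPjeig : ∀ k, H ∘L Pj k = (lam k : ℂ) • Pj k)
    (hinj : Function.Injective lam)
    {j k : Fin m} (hjk : j ≠ k) : Pj j ∘L Pj k = 0 := by
  have e1 : Pj j * H = (lam j : ℂ) • Pj j := aux_PjH H lam Pj hHsa hPjsa hPjeig j
  have e2 : H * Pj k = (lam k : ℂ) • Pj k := hPjeig k
  have h : (lam j : ℂ) • (Pj j * Pj k) = (lam k : ℂ) • (Pj j * Pj k) := by
    calc (lam j : ℂ) • (Pj j * Pj k) = (Pj j * H) * Pj k := by rw [e1, smul_mul_assoc]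
    _ = Pj j * (H * Pj k) := by rw [mul_assoc]
    _ = (lam k : ℂ) • (Pj j * Pj k) := by rw [e2, mul_smul_comm]
  have h2 : ((lam j : ℂ) - lam k) • (Pj j * Pj k) = 0 := by rw [sub_smul, h, sub_self]
  rcases smul_eq_zero.mp h2 with h3 | h3
  · exact absurd (hinj (Complex.ofReal_inj.mp (sub_eq_zero.mp h3))) hjk
  · exact h3

lemma aux_PPj {m : ℕ} (H P : V →L[ℂ] V) (lam : Fin m → ℝ) (Pj : Fin m → V →L[ℂ] V)
    (hHsa : IsSelfAdjoint H) (hPjsa : ∀ k, IsSelfAdjoint (Pj k))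
    (hPjidem : ∀ k, Pj k ∘L Pj k = Pj k)
    (hPjeig : ∀ k, H ∘L Pj k = (lam k : ℂ) • Pj k)
    (hinj : Function.Injective lam)
    (hPsum : P = ∑ k, Pj k) (j : Fin m) :
    P ∘L Pj j = Pj j ∧ Pj j ∘L P = Pj j := by
  constructor
  · show P * Pj j = Pj j
    rw [hPsum, Finset.sum_mul]
    refine (Finset.sum_eq_single j ?_ ?_).trans (hPjidem j)
    · intro l _ hl
      exact aux_orth H lam Pj hHsa hPjsa hPjeig hinj hl
    · exact fun h => absurd (Finset.mem_univ j) h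
  · show Pj j * P = Pj j
    rw [hPsum, Finset.mul_sum]
    refine (Finset.sum_eq_single j ?_ ?_).trans (hPjidem j)
    · intro l _ hl
      exact aux_orth H lam Pj hHsa hPjsa hPjeig hinj (Ne.symm hl)
    · exact fun h => absurd (Finset.mem_univ j) h

lemma aux_R_bound {m : ℕ} (H P : V →L[ℂ] V) (lam : Fin m → ℝ) (g : ℝ)
    (Pj : Fin m → V →L[ℂ] V) (Rj : V →L[ℂ] V) (j : Fin m)
    (hHsa : IsSelfAdjoint H)
    (hPjsa : ∀ k, IsSelfAdjoint (Pj k))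
    (hPjfull : ∀ k, ∀ v : V, H v = (lam k : ℂ) • v → Pj k v = v)
    (hPjP : ∀ k, Pj k ∘L P = Pj k)
    (hg : 0 < g)
    (hgap : ∀ (μ : ℝ) (v : V), v ≠ 0 → H v = (μ : ℂ) • v → (∀ k, μ ≠ lam k) →
      ∀ k, g ≤ |μ - lam k|)
    (hRl : (H - (lam j : ℂ) • 1) ∘L Rj = 1 - P)
    (hRP : P ∘L Rj = 0) (u : V) :
    g * ‖Rj u‖ ≤ ‖u - P u‖ := by
  have key : ∀ w : V, P w = 0 → g * ‖w‖ ≤ ‖H w - (lam j : ℂ) • w‖ := by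
    intro w hw
    have hsym : (H : V →ₗ[ℂ] V).IsSymmetric :=
      ContinuousLinearMap.isSelfAdjoint_iff_isSymmetric.mp hHsa
    set n := Module.finrank ℂ V with hn
    let b := hsym.eigenvectorBasis rfl
    let μ := hsym.eigenvalues rfl
    set y := H w - (lam j : ℂ) • w with hy
    have hrepr : ∀ i, b.repr y i = ((μ i - lam j : ℝ) : ℂ) * b.repr w i := by
      intro i
      have e : ∀ v : V, b.repr v i = ⟪b i, v⟫_ℂ := fun v => b.repr_apply_apply v i
      have hHw : b.repr (H w) i = (μ i : ℂ) * b.repr w i :=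
        hsym.eigenvectorBasis_apply_self_apply rfl w i
      have hHw' : ⟪b i, H w⟫_ℂ = (μ i : ℂ) * ⟪b i, w⟫_ℂ := by
        rw [← e, ← e]; exact hHw
      rw [e, e, hy, inner_sub_right, inner_smul_right, hHw']
      push_cast
      ring
    have hi : ∀ i, (g * ‖b.repr w i‖) ^ 2 ≤ ‖b.repr y i‖ ^ 2 := by
      intro i
      rw [hrepr i]
      by_cases hc : b.repr w i = 0
      · simp [hc]
      · have hb : H (b i) = ((μ i : ℝ) : ℂ) • b i := hsym.apply_eigenvectorBasis rfl i
        have hbne : b i ≠ 0 := by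
          intro h0
          have := b.orthonormal.1 i
          rw [h0] at this
          simp at this
        have hge : g ≤ |μ i - lam j| := by
          by_cases hex : ∃ k, μ i = lam k
          · exfalso
            obtain ⟨k, hk⟩ := hex
            have h1 : Pj k (b i) = b i := hPjfull k (b i) (by rw [hb, hk])
            have h2 : Pj k w = 0 := by
              have := congrArg (fun q : V →L[ℂ] V => q w) (hPjP k)
              rw [← this]
              simp [hw]
            have h3 : b.repr w i = 0 := by
              rw [b.repr_apply_apply, ← h1, aux_symm (Pj k) (hPjsa k), h2, inner_zero_right]
            exact hc h3
          · push_neg at hex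
            exact hgap (μ i) (b i) hbne hb hex j
        have heq : |μ i - lam j| * ‖b.repr w i‖ = ‖((μ i - lam j : ℝ) : ℂ) * b.repr w i‖ := by
          rw [norm_mul, Complex.norm_real, Real.norm_eq_abs]
        calc (g * ‖b.repr w i‖) ^ 2 ≤ (|μ i - lam j| * ‖b.repr w i‖) ^ 2 := by
              have h2 : g * ‖b.repr w i‖ ≤ |μ i - lam j| * ‖b.repr w i‖ :=
                mul_le_mul_of_nonneg_right hge (norm_nonneg _)
              exact pow_le_pow_left₀ (by positivity) h2 2
        _ = ‖((μ i - lam j : ℝ) : ℂ) * b.repr w i‖ ^ 2 := by rw [heq]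
    have hnw : ‖w‖ ^ 2 = ∑ i, ‖b.repr w i‖ ^ 2 := by
      rw [← b.repr.norm_map w, EuclideanSpace.norm_eq, Real.sq_sqrt (by positivity)]
    have hny : ‖y‖ ^ 2 = ∑ i, ‖b.repr y i‖ ^ 2 := by
      rw [← b.repr.norm_map y, EuclideanSpace.norm_eq, Real.sq_sqrt (by positivity)]
    have hsq : (g * ‖w‖) ^ 2 ≤ ‖y‖ ^ 2 := by
      rw [mul_pow, hnw, hny, Finset.mul_sum]
      refine Finset.sum_le_sum fun i _ => ?_
      have := hi i
      rw [mul_pow] at this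
      exact this
    have h1 : 0 ≤ g * ‖w‖ := by positivity
    nlinarith [norm_nonneg y]
  have h1 : P (Rj u) = 0 := by
    have := congrArg (fun q : V →L[ℂ] V => q u) hRP
    simpa using this
  have h2 : H (Rj u) - (lam j : ℂ) • (Rj u) = u - P u := by
    have := congrArg (fun q : V →L[ℂ] V => q u) hRl
    simpa [ContinuousLinearMap.sub_apply, ContinuousLinearMap.smul_apply] using this
  have := key (Rj u) h1
  rwa [h2] at this

lemma aux_TW_bound {m : ℕ} (H P X : V →L[ℂ] V) (lam : Fin m → ℝ) (g : ℝ)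
    (Pj Rj : Fin m → V →L[ℂ] V)
    (hHsa : IsSelfAdjoint H) (hPsa : IsSelfAdjoint P) (hPidem : P ∘L P = P)
    (hPjsa : ∀ k, IsSelfAdjoint (Pj k))
    (hPjidem : ∀ k, Pj k ∘L Pj k = Pj k)
    (hPjeig : ∀ k, H ∘L Pj k = (lam k : ℂ) • Pj k)
    (hPjfull : ∀ k, ∀ v : V, H v = (lam k : ℂ) • v → Pj k v = v)
    (hinj : Function.Injective lam)
    (hPsum : P = ∑ k, Pj k)
    (hg : 0 < g)
    (hgap : ∀ (μ : ℝ) (v : V), v ≠ 0 → H v = (μ : ℂ) • v → (∀ k, μ ≠ lam k) →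
      ∀ k, g ≤ |μ - lam k|)
    (hRl : ∀ j, (H - (lam j : ℂ) • 1) ∘L Rj j = 1 - P)
    (hRP : ∀ j, P ∘L Rj j = 0) :
    ‖∑ j, (Pj j ∘L X ∘L Rj j + Rj j ∘L X ∘L Pj j)‖ ≤ Real.sqrt m * ‖X‖ / g := by
  have hPPj : ∀ k, P ∘L Pj k = Pj k :=
    fun k => (aux_PPj H P lam Pj hHsa hPjsa hPjidem hPjeig hinj hPsum k).1
  have hPjP : ∀ k, Pj k ∘L P = Pj k :=
    fun k => (aux_PPj H P lam Pj hHsa hPjsa hPjidem hPjeig hinj hPsum k).2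
  have hRnorm : ∀ j u, g * ‖Rj j u‖ ≤ ‖u - P u‖ := fun j u =>
    aux_R_bound H P lam g Pj (Rj j) j hHsa hPjsa hPjfull hPjP hg hgap (hRl j) (hRP j) u
  have hQle : ∀ u : V, ‖u - P u‖ ≤ ‖u‖ := by
    intro u
    have hQsa : IsSelfAdjoint (1 - P : V →L[ℂ] V) := (IsSelfAdjoint.one (R := V →L[ℂ] V)).sub hPsa
    have hPmul : P * P = P := hPidem
    have hQidem : (1 - P : V →L[ℂ] V) ∘L (1 - P) = 1 - P := by
      show ((1 : V →L[ℂ] V) - P) * (1 - P) = 1 - P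
      rw [sub_mul, one_mul, mul_sub, mul_one, hPmul]
      abel
    have := aux_proj_norm_le (1 - P) hQsa hQidem u
    simpa using this
  refine ContinuousLinearMap.opNorm_le_bound _ (by positivity) fun v => ?_
  set a : Fin m → V := fun j => Pj j (X (Rj j v)) with ha
  set c : Fin m → V := fun j => Rj j (X (Pj j v)) with hc
  have happ : (∑ j, (Pj j ∘L X ∘L Rj j + Rj j ∘L X ∘L Pj j)) v = (∑ j, a j) + (∑ j, c j) := by
    rw [ContinuousLinearMap.sum_apply]
    simp only [ContinuousLinearMap.add_apply, ContinuousLinearMap.coe_comp', Function.comp_apply]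
    rw [Finset.sum_add_distrib]
  -- bound on each ‖a j‖ and ‖c j‖
  have haj : ∀ j, ‖a j‖ ≤ ‖X‖ * ‖v - P v‖ / g := by
    intro j
    have h1 : ‖a j‖ ≤ ‖X (Rj j v)‖ := aux_proj_norm_le (Pj j) (hPjsa j) (hPjidem j) _
    have h2 : ‖X (Rj j v)‖ ≤ ‖X‖ * ‖Rj j v‖ := X.le_opNorm _
    have h3 : g * ‖Rj j v‖ ≤ ‖v - P v‖ := hRnorm j v
    have h4 : ‖Rj j v‖ ≤ ‖v - P v‖ / g := by
      rw [le_div_iff₀ hg]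
      linarith
    calc ‖a j‖ ≤ ‖X‖ * ‖Rj j v‖ := h1.trans h2
    _ ≤ ‖X‖ * (‖v - P v‖ / g) := by
        exact mul_le_mul_of_nonneg_left h4 (norm_nonneg X)
    _ = ‖X‖ * ‖v - P v‖ / g := by ring
  have hcj : ∀ j, ‖c j‖ ≤ ‖X‖ / g * ‖Pj j v‖ := by
    intro j
    have h3 : g * ‖Rj j (X (Pj j v))‖ ≤ ‖X (Pj j v) - P (X (Pj j v))‖ := hRnorm j _
    have h5 : ‖X (Pj j v) - P (X (Pj j v))‖ ≤ ‖X (Pj j v)‖ := hQle _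
    have h6 : ‖X (Pj j v)‖ ≤ ‖X‖ * ‖Pj j v‖ := X.le_opNorm _
    rw [div_mul_eq_mul_div, le_div_iff₀ hg]
    calc ‖c j‖ * g = g * ‖Rj j (X (Pj j v))‖ := by rw [mul_comm]
    _ ≤ ‖X‖ * ‖Pj j v‖ := h3.trans (h5.trans h6)
  -- orthogonality facts
  have hPa : ∀ j, P (a j) = a j := by
    intro j
    have := congrArg (fun q : V →L[ℂ] V => q (X (Rj j v))) (hPPj j)
    simpa using this
  have hPc : ∀ j, P (c j) = 0 := by
    intro j
    have := congrArg (fun q : V →L[ℂ] V => q (X (Pj j v))) (hRP j)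
    simpa using this
  have hA2 : ‖∑ j, a j‖ ^ 2 = ∑ j, ‖a j‖ ^ 2 := by
    refine aux_norm_sum_sq a fun i j hij => ?_
    rw [ha]
    simp only
    rw [aux_symm (Pj i) (hPjsa i)]
    have : Pj i (Pj j (X (Rj j v))) = 0 := by
      have := congrArg (fun q : V →L[ℂ] V => q (X (Rj j v)))
        (aux_orth H lam Pj hHsa hPjsa hPjeig hinj hij)
      simpa using this
    rw [this, inner_zero_right]
  have hPv2 : ∑ j, ‖Pj j v‖ ^ 2 = ‖P v‖ ^ 2 := by
    have hPvsum : P v = ∑ j, Pj j v := by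
      rw [hPsum]
      simp
    rw [hPvsum]
    refine (aux_norm_sum_sq (fun j => Pj j v) fun i j hij => ?_).symm
    rw [aux_symm (Pj i) (hPjsa i)]
    have : Pj i (Pj j v) = 0 := by
      have := congrArg (fun q : V →L[ℂ] V => q v)
        (aux_orth H lam Pj hHsa hPjsa hPjeig hinj hij)
      simpa using this
    rw [this, inner_zero_right]
  -- the two blocks
  have hA : ‖∑ j, a j‖ ^ 2 ≤ m * (‖X‖ / g) ^ 2 * ‖v - P v‖ ^ 2 := by
    rw [hA2]
    calc ∑ j, ‖a j‖ ^ 2 ≤ ∑ _j : Fin m, (‖X‖ * ‖v - P v‖ / g) ^ 2 := by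
          refine Finset.sum_le_sum fun j _ => ?_
          exact pow_le_pow_left₀ (norm_nonneg _) (haj j) 2
    _ = m * (‖X‖ / g) ^ 2 * ‖v - P v‖ ^ 2 := by
        rw [Finset.sum_const, Finset.card_univ, Fintype.card_fin]
        push_cast
        ring
  have hB : ‖∑ j, c j‖ ^ 2 ≤ m * (‖X‖ / g) ^ 2 * ‖P v‖ ^ 2 := by
    have h1 : ‖∑ j, c j‖ ≤ ∑ j, ‖c j‖ := norm_sum_le _ _
    have h2 : ∑ j, ‖c j‖ ≤ ‖X‖ / g * ∑ j, ‖Pj j v‖ := by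
      rw [Finset.mul_sum]
      exact Finset.sum_le_sum fun j _ => hcj j
    have h3 : (∑ j, ‖Pj j v‖) ^ 2 ≤ m * ∑ j, ‖Pj j v‖ ^ 2 := by
      have := sq_sum_le_card_mul_sum_sq (s := Finset.univ) (f := fun j => ‖Pj j v‖)
      simpa using this
    have h4 : ‖∑ j, c j‖ ^ 2 ≤ (‖X‖ / g) ^ 2 * (∑ j, ‖Pj j v‖) ^ 2 := by
      rw [← mul_pow]
      refine pow_le_pow_left₀ (norm_nonneg _) (h1.trans h2) 2
    calc ‖∑ j, c j‖ ^ 2 ≤ (‖X‖ / g) ^ 2 * (∑ j, ‖Pj j v‖) ^ 2 := h4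
    _ ≤ (‖X‖ / g) ^ 2 * (m * ∑ j, ‖Pj j v‖ ^ 2) := by
        refine mul_le_mul_of_nonneg_left h3 (by positivity)
    _ = m * (‖X‖ / g) ^ 2 * ‖P v‖ ^ 2 := by rw [hPv2]; ring
  -- orthogonality of the two blocks
  have hortho : ⟪∑ j, a j, ∑ j, c j⟫_ℂ = 0 := by
    have hPA : P (∑ j, a j) = ∑ j, a j := by
      rw [map_sum]
      exact Finset.sum_congr rfl fun j _ => hPa j
    have hPC : P (∑ j, c j) = 0 := by
      rw [map_sum]
      exact Finset.sum_eq_zero fun j _ => hPc j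
    calc ⟪∑ j, a j, ∑ j, c j⟫_ℂ = ⟪P (∑ j, a j), ∑ j, c j⟫_ℂ := by rw [hPA]
    _ = ⟪∑ j, a j, P (∑ j, c j)⟫_ℂ := aux_symm P hPsa _ _
    _ = 0 := by rw [hPC, inner_zero_right]
  have htot : ‖(∑ j, a j) + (∑ j, c j)‖ ^ 2 = ‖∑ j, a j‖ ^ 2 + ‖∑ j, c j‖ ^ 2 := by
    have := norm_add_sq (𝕜 := ℂ) (∑ j, a j) (∑ j, c j)
    rw [hortho] at this
    simpa using this
  have hpyth : ‖P v‖ ^ 2 + ‖v - P v‖ ^ 2 = ‖v‖ ^ 2 := aux_pythagoras P hPsa hPidem v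
  have hfin : ‖(∑ j, a j) + (∑ j, c j)‖ ^ 2 ≤ (Real.sqrt m * ‖X‖ / g * ‖v‖) ^ 2 := by
    rw [htot]
    have hm : (Real.sqrt m) ^ 2 = (m : ℝ) := Real.sq_sqrt (Nat.cast_nonneg m)
    have : (Real.sqrt m * ‖X‖ / g * ‖v‖) ^ 2 = m * (‖X‖ / g) ^ 2 * ‖v‖ ^ 2 := by
      rw [mul_pow, div_pow, mul_pow, hm, div_pow]
      ring
    rw [this, ← hpyth]
    nlinarith [hA, hB]
  rw [happ]
  have := Real.sqrt_le_sqrt hfin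
  rwa [Real.sqrt_sq (norm_nonneg _), Real.sqrt_sq (by positivity)] at this

lemma aux_identity {m : ℕ} (H H' P P' : V →L[ℂ] V) (lam : Fin m → ℝ)
    (Pj Rj : Fin m → V →L[ℂ] V)
    (hPjeig : ∀ k, H ∘L Pj k = (lam k : ℂ) • Pj k)
    (hPjH : ∀ k, Pj k ∘L H = (lam k : ℂ) • Pj k)
    (hPPj : ∀ k, P ∘L Pj k = Pj k) (hPjP : ∀ k, Pj k ∘L P = Pj k)
    (hPidem : P ∘L P = P)
    (hPsum : P = ∑ k, Pj k)
    (hRl : ∀ j, (H - (lam j : ℂ) • 1) ∘L Rj j = 1 - P)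
    (hRr : ∀ j, Rj j ∘L (H - (lam j : ℂ) • 1) = 1 - P)
    (hRP : ∀ j, P ∘L Rj j = 0) (hRPr : ∀ j, Rj j ∘L P = 0)
    (D1 : H' ∘L P + H ∘L P' = P' ∘L H + P ∘L H')
    (D2 : P' = P ∘L P' + P' ∘L P) :
    P' = -∑ j, (Pj j ∘L H' ∘L Rj j + Rj j ∘L H' ∘L Pj j) := by
  have hPmul : P * P = P := hPidem
  have D1' : H' * P + H * P' = P' * H + P * H' := D1
  have D2' : P' = P * P' + P' * P := D2
  have hRl' : ∀ j, (H - (lam j : ℂ) • 1) * Rj j = 1 - P := hRl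
  have hRr' : ∀ j, Rj j * (H - (lam j : ℂ) • 1) = 1 - P := hRr
  have hRP' : ∀ j, P * Rj j = 0 := hRP
  have hRPr' : ∀ j, Rj j * P = 0 := hRPr
  -- step 1 : Pj j * P' * (1-P) = -(Pj j * (H' * Rj j))
  have step1 : ∀ j, Pj j * P' * (1 - P) = -(Pj j * (H' * Rj j)) := by
    intro j
    have e2 : Pj j * H = (lam j : ℂ) • Pj j := hPjH j
    have e3 : Pj j * P = Pj j := hPjP j
    have w1 : Pj j * (H' * P) + (lam j : ℂ) • (Pj j * P') =
        Pj j * (P' * H) + Pj j * H' := by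
      have h := congrArg (fun Z => Pj j * Z) D1'
      simp only [mul_add] at h
      rw [← mul_assoc, ← mul_assoc, ← mul_assoc, ← mul_assoc, e2, smul_mul_assoc, e3] at h
      exact h
    have key : Pj j * P' * (H - (lam j : ℂ) • 1) = -(Pj j * H' * (1 - P)) := by
      have lhs : Pj j * P' * (H - (lam j : ℂ) • 1) =
          Pj j * (P' * H) - (lam j : ℂ) • (Pj j * P') := by
        rw [mul_sub, mul_assoc, mul_smul_comm, mul_one]
      have rhs : Pj j * H' * (1 - P) = Pj j * H' - Pj j * (H' * P) := by
        rw [mul_sub, mul_one, mul_assoc]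
      rw [lhs, rhs]
      linear_combination (norm := abel1) w1.symm
    have hQR : (1 - P : V →L[ℂ] V) * Rj j = Rj j := by
      rw [sub_mul, one_mul, hRP' j, sub_zero]
    calc Pj j * P' * (1 - P)
        = Pj j * P' * ((H - (lam j : ℂ) • 1) * Rj j) := by rw [← hRl' j]
    _ = (Pj j * P' * (H - (lam j : ℂ) • 1)) * Rj j :=
        (mul_assoc (Pj j * P') (H - (lam j : ℂ) • 1) (Rj j)).symm
    _ = -(Pj j * H' * (1 - P)) * Rj j := by rw [key]
    _ = -(Pj j * H' * ((1 - P) * Rj j)) := by rw [neg_mul, mul_assoc]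
    _ = -(Pj j * (H' * Rj j)) := by rw [hQR, mul_assoc]
  -- step 2 : (1-P) * P' * Pj j = -(Rj j * (H' * Pj j))
  have step2 : ∀ j, (1 - P) * P' * Pj j = -(Rj j * (H' * Pj j)) := by
    intro j
    have e2 : H * Pj j = (lam j : ℂ) • Pj j := hPjeig j
    have e3 : P * Pj j = Pj j := hPPj j
    have w2 : H' * Pj j + (H * P') * Pj j =
        (lam j : ℂ) • (P' * Pj j) + (P * H') * Pj j := by
      have h := congrArg (fun Z => Z * Pj j) D1'
      simp only [add_mul] at h
      rw [mul_assoc H' P, e3] at h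
      rw [mul_assoc P' H, e2, mul_smul_comm] at h
      exact h
    have key : (H - (lam j : ℂ) • 1) * P' * Pj j = -((1 - P) * H' * Pj j) := by
      have lhs : (H - (lam j : ℂ) • 1) * P' * Pj j =
          (H * P') * Pj j - (lam j : ℂ) • (P' * Pj j) := by
        rw [sub_mul, sub_mul, smul_mul_assoc, smul_mul_assoc, one_mul]
      have rhs : (1 - P) * H' * Pj j = H' * Pj j - (P * H') * Pj j := by
        rw [sub_mul, sub_mul, one_mul]
      rw [lhs, rhs]
      linear_combination (norm := abel1) w2
    have hQR : Rj j * (1 - P : V →L[ℂ] V) = Rj j := by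
      rw [mul_sub, mul_one, hRPr' j, sub_zero]
    calc (1 - P) * P' * Pj j
        = (Rj j * (H - (lam j : ℂ) • 1)) * P' * Pj j := by rw [hRr' j]
    _ = Rj j * ((H - (lam j : ℂ) • 1) * P' * Pj j) := by simp only [mul_assoc]
    _ = Rj j * (-((1 - P) * H' * Pj j)) := by rw [key]
    _ = -((Rj j * (1 - P)) * (H' * Pj j)) := by rw [mul_neg]; simp only [mul_assoc]
    _ = -(Rj j * (H' * Pj j)) := by rw [hQR]
  -- splitting P'
  have h0 : P * P' * P = 0 := by
    have h : P * P' * P = P * P' * P + P * P' * P := by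
      nth_rewrite 1 [D2']
      rw [mul_add, add_mul]
      rw [← mul_assoc P P P', hPmul]
      rw [← mul_assoc P P' P, mul_assoc (P * P') P P, hPmul]
    rwa [right_eq_add] at h
  have hsplit : P' = P * P' * (1 - P) + (1 - P) * P' * P := by
    have e1 : P * P' * (1 - P) = P * P' - P * P' * P := by rw [mul_sub, mul_one]
    have e2 : (1 - P) * P' * P = P' * P - P * P' * P := by
      rw [sub_mul, sub_mul, one_mul]
    rw [e1, e2, h0, sub_zero, sub_zero]
    exact D2'
  -- expand P as sum
  have hexp1 : P * P' * (1 - P) = ∑ j, Pj j * P' * (1 - P) := by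
    rw [hPsum, Finset.sum_mul, Finset.sum_mul]
  have hexp2 : (1 - P) * P' * P = ∑ j, (1 - P) * P' * Pj j := by
    nth_rewrite 2 [hPsum]
    rw [Finset.mul_sum]
  show P' = -∑ j, (Pj j * (H' * Rj j) + Rj j * (H' * Pj j))
  calc P' = P * P' * (1 - P) + (1 - P) * P' * P := hsplit
  _ = (∑ j, Pj j * P' * (1 - P)) + ∑ j, (1 - P) * P' * Pj j := by rw [hexp1, hexp2]
  _ = (∑ j, -(Pj j * (H' * Rj j))) + ∑ j, -(Rj j * (H' * Pj j)) := by
      rw [Finset.sum_congr rfl fun j _ => step1 j, Finset.sum_congr rfl fun j _ => step2 j]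
  _ = -∑ j, (Pj j * (H' * Rj j) + Rj j * (H' * Pj j)) := by
      rw [← Finset.sum_add_distrib, ← Finset.sum_neg_distrib]
      exact Finset.sum_congr rfl fun j _ => (neg_add _ _).symm

end FirstOrderGapAux


/-- **First-order gap bounds (Lemma 9, parts 1 and 2).**

`H s` is a continuously differentiable family of self-adjoint operators (derivative
`H'`), `P s` a continuously differentiable family of orthogonal projections (derivative
`P'`) commuting with `H s`, equal to the sum of the spectral projections `Pj s j` of
`H s` onto the eigenvalues `lam s j`, with gap `g s > 0` to the rest of the spectrum.
`R s j` is the reduced resolvent of `H s` at `lam s j` (characterized by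
`(H−λⱼ) R = R (H−λⱼ) = 1−P`, `P R = R P = 0`), and
`TW s X := −Σⱼ ( Pⱼ X R̂_{λⱼ} + R̂_{λⱼ} X Pⱼ )` the twiddle.

Then `‖Ṗ(s)‖ ≤ √m ‖Ḣ(s)‖ / g(s)` and
`‖(Ṗ(s))~‖ ≤ √m ‖Ṗ(s)‖ / g(s) ≤ m ‖Ḣ(s)‖ / g(s)²`. -/
theorem first_order_gap_bounds
    {V : Type*} [NormedAddCommGroup V] [InnerProductSpace ℂ V] [FiniteDimensional ℂ V]
    (m : ℕ)
    (H H' P P' : ℝ → V →L[ℂ] V)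
    (lam : ℝ → Fin m → ℝ) (g : ℝ → ℝ)
    (Pj R : ℝ → Fin m → V →L[ℂ] V)
    (hHsa : ∀ s ∈ Set.Icc (0:ℝ) 1, IsSelfAdjoint (H s))
    (hH' : ∀ s ∈ Set.Icc (0:ℝ) 1, HasDerivAt H (H' s) s)
    (hH'c : ContinuousOn H' (Set.Icc (0:ℝ) 1))
    (hPsa : ∀ s ∈ Set.Icc (0:ℝ) 1, IsSelfAdjoint (P s))
    (hPidem : ∀ s ∈ Set.Icc (0:ℝ) 1, P s ∘L P s = P s)
    (hPH : ∀ s ∈ Set.Icc (0:ℝ) 1, H s ∘L P s = P s ∘L H s)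
    (hP' : ∀ s ∈ Set.Icc (0:ℝ) 1, HasDerivAt P (P' s) s)
    (hP'c : ContinuousOn P' (Set.Icc (0:ℝ) 1))
    (hPjsa : ∀ s ∈ Set.Icc (0:ℝ) 1, ∀ j, IsSelfAdjoint (Pj s j))
    (hPjidem : ∀ s ∈ Set.Icc (0:ℝ) 1, ∀ j, Pj s j ∘L Pj s j = Pj s j)
    (hPjne : ∀ s ∈ Set.Icc (0:ℝ) 1, ∀ j, Pj s j ≠ 0)
    (hPjeig : ∀ s ∈ Set.Icc (0:ℝ) 1, ∀ j, H s ∘L Pj s j = (lam s j : ℂ) • Pj s j)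
    (hPjfull : ∀ s ∈ Set.Icc (0:ℝ) 1, ∀ j, ∀ v : V,
      H s v = (lam s j : ℂ) • v → Pj s j v = v)
    (hPsum : ∀ s ∈ Set.Icc (0:ℝ) 1, P s = ∑ j, Pj s j)
    (hgpos : ∀ s ∈ Set.Icc (0:ℝ) 1, 0 < g s)
    (hgap : ∀ s ∈ Set.Icc (0:ℝ) 1, ∀ (μ : ℝ) (v : V), v ≠ 0 → H s v = (μ : ℂ) • v →
      (∀ j, μ ≠ lam s j) → ∀ j, g s ≤ |μ - lam s j|)
    (hRl : ∀ s ∈ Set.Icc (0:ℝ) 1, ∀ j,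
      (H s - (lam s j : ℂ) • 1) ∘L R s j = 1 - P s)
    (hRr : ∀ s ∈ Set.Icc (0:ℝ) 1, ∀ j,
      R s j ∘L (H s - (lam s j : ℂ) • 1) = 1 - P s)
    (hRP : ∀ s ∈ Set.Icc (0:ℝ) 1, ∀ j, P s ∘L R s j = 0 ∧ R s j ∘L P s = 0) :
    let TW : ℝ → (V →L[ℂ] V) → V →L[ℂ] V := fun s Z =>
      -(∑ j, (Pj s j ∘L Z ∘L R s j + R s j ∘L Z ∘L Pj s j))
    ∀ s ∈ Set.Icc (0:ℝ) 1,
      ‖P' s‖ ≤ Real.sqrt m * ‖H' s‖ / g s ∧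
      ‖TW s (P' s)‖ ≤ Real.sqrt m * ‖P' s‖ / g s ∧
      Real.sqrt m * ‖P' s‖ / g s ≤ (m : ℝ) * ‖H' s‖ / (g s) ^ 2 := by
  intro TW s hs
  have hsa := hHsa s hs
  have hUD : UniqueDiffWithinAt ℝ (Set.Icc (0:ℝ) 1) s :=
    (uniqueDiffOn_Icc (by norm_num : (0:ℝ) < 1)) s hs
  -- derivative of H*P = P*H
  have D1 : H' s ∘L P s + H s ∘L P' s = P' s ∘L H s + P s ∘L H' s := by
    have d1 : HasDerivAt (fun t => H t * P t) (H' s * P s + H s * P' s) s :=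
      (hH' s hs).mul (hP' s hs)
    have d2 : HasDerivAt (fun t => P t * H t) (P' s * H s + P s * H' s) s :=
      (hP' s hs).mul (hH' s hs)
    have w1 : HasDerivWithinAt (fun t => H t * P t) (H' s * P s + H s * P' s)
        (Set.Icc 0 1) s := d1.hasDerivWithinAt
    have w2 : HasDerivWithinAt (fun t => H t * P t) (P' s * H s + P s * H' s)
        (Set.Icc 0 1) s := by
      refine (d2.hasDerivWithinAt).congr (fun t ht => ?_) (hPH s hs)
      exact hPH t ht
    have e1 := w1.derivWithin hUD
    have e2 := w2.derivWithin hUD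
    exact e1.symm.trans e2
  -- derivative of P*P = P
  have D2 : P' s = P s ∘L P' s + P' s ∘L P s := by
    have d1 : HasDerivAt (fun t => P t * P t) (P' s * P s + P s * P' s) s :=
      (hP' s hs).mul (hP' s hs)
    have w1 : HasDerivWithinAt (fun t => P t * P t) (P' s * P s + P s * P' s)
        (Set.Icc 0 1) s := d1.hasDerivWithinAt
    have w2 : HasDerivWithinAt (fun t => P t * P t) (P' s) (Set.Icc 0 1) s := by
      refine ((hP' s hs).hasDerivWithinAt).congr (fun t ht => ?_) (hPidem s hs)
      exact hPidem t ht
    have e1 := w1.derivWithin hUD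
    have e2 := w2.derivWithin hUD
    have h := e2.symm.trans e1
    exact h.trans (add_comm _ _)
  -- static facts
  have hinj : Function.Injective (lam s) :=
    aux_lam_inj (H s) (P s) (lam s) (Pj s) hsa (hPjsa s hs) (hPjidem s hs) (hPjne s hs)
      (hPjeig s hs) (hPjfull s hs) (hPsum s hs) (hPidem s hs)
  have hPjHs : ∀ k, Pj s k ∘L H s = (lam s k : ℂ) • Pj s k :=
    aux_PjH (H s) (lam s) (Pj s) hsa (hPjsa s hs) (hPjeig s hs)
  have hPPjs : ∀ k, P s ∘L Pj s k = Pj s k := fun k =>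
    (aux_PPj (H s) (P s) (lam s) (Pj s) hsa (hPjsa s hs) (hPjidem s hs) (hPjeig s hs)
      hinj (hPsum s hs) k).1
  have hPjPs : ∀ k, Pj s k ∘L P s = Pj s k := fun k =>
    (aux_PPj (H s) (P s) (lam s) (Pj s) hsa (hPjsa s hs) (hPjidem s hs) (hPjeig s hs)
      hinj (hPsum s hs) k).2
  have hid : P' s = -∑ j, (Pj s j ∘L H' s ∘L R s j + R s j ∘L H' s ∘L Pj s j) :=
    aux_identity (H s) (H' s) (P s) (P' s) (lam s) (Pj s) (R s) (hPjeig s hs) hPjHs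
      hPPjs hPjPs (hPidem s hs) (hPsum s hs) (hRl s hs) (hRr s hs)
      (fun j => (hRP s hs j).1) (fun j => (hRP s hs j).2) D1 D2
  have bound : ∀ X : V →L[ℂ] V,
      ‖∑ j, (Pj s j ∘L X ∘L R s j + R s j ∘L X ∘L Pj s j)‖ ≤ Real.sqrt m * ‖X‖ / g s :=
    fun X => aux_TW_bound (H s) (P s) X (lam s) (g s) (Pj s) (R s) hsa (hPsa s hs)
      (hPidem s hs) (hPjsa s hs) (hPjidem s hs) (hPjeig s hs) (hPjfull s hs) hinj
      (hPsum s hs) (hgpos s hs) (hgap s hs) (hRl s hs) (fun j => (hRP s hs j).1)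
  have part1 : ‖P' s‖ ≤ Real.sqrt m * ‖H' s‖ / g s := by
    rw [hid, norm_neg]
    exact bound (H' s)
  refine ⟨part1, ?_, ?_⟩
  · show ‖-(∑ j, (Pj s j ∘L P' s ∘L R s j + R s j ∘L P' s ∘L Pj s j))‖ ≤
      Real.sqrt m * ‖P' s‖ / g s
    rw [norm_neg]
    exact bound (P' s)
  · have hg := hgpos s hs
    have hm : Real.sqrt m * Real.sqrt m = (m : ℝ) := Real.mul_self_sqrt (Nat.cast_nonneg m)
    calc Real.sqrt m * ‖P' s‖ / g s
        ≤ Real.sqrt m * (Real.sqrt m * ‖H' s‖ / g s) / g s := by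
          gcongr
    _ = Real.sqrt m * Real.sqrt m * ‖H' s‖ / (g s) ^ 2 := by
        ring
    _ = (m : ℝ) * ‖H' s‖ / (g s) ^ 2 := by rw [hm]
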